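/- Let q be an odd prime power with q ≡ 1 (mod 4). Then PGL(2,F_q) contains a subgroup of order 12 (isomorphic to Alt(4)) every element of which maps some 3-element subset of ℙ¹(F_q) onto itself; in particular, PGL(2,F_q) has an intersecting subset of size 12 with respect to the induced action on 3-element subsets of ℙ¹(F_q). -/

import Mathlib

open scoped Pointwise MatrixGroups

noncomputable section

/-- The projective line over `K`. -/
abbrev Proj (K : Type*) [Field K] := Projectivization K (Fin 2 → K)

variable {K : Type*} [Field K]

lemma GLmulVecLin_injective (g : GL (Fin 2) K) :
    Function.Injective ((g : Matrix (Fin 2) (Fin 2) K).mulVecLin) := by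
  intro u v huv
  have h := congrArg ((((g⁻¹ : GL (Fin 2) K) : Matrix (Fin 2) (Fin 2) K)).mulVecLin) huv
  simp only [Matrix.mulVecLin_apply, Matrix.mulVec_mulVec] at h
  rw [show ((g⁻¹ : GL (Fin 2) K) : Matrix (Fin 2) (Fin 2) K) * (g : Matrix (Fin 2) (Fin 2) K) = 1
    from g.inv_mul, Matrix.one_mulVec, Matrix.one_mulVec] at h
  exact h

lemma GLmulVec_ne_zero (g : GL (Fin 2) K) {v : Fin 2 → K} (hv : v ≠ 0) :
    (g : Matrix (Fin 2) (Fin 2) K).mulVec v ≠ 0 := by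
  intro h
  apply hv
  have : ((g : Matrix (Fin 2) (Fin 2) K)).mulVecLin v =
      ((g : Matrix (Fin 2) (Fin 2) K)).mulVecLin 0 := by
    simpa [Matrix.mulVecLin_apply] using h
  simpa using GLmulVecLin_injective g this

/-- The action of `GL(2,K)` on the projective line by matrix-vector multiplication on
representatives. -/
instance GLProjAction : MulAction (GL (Fin 2) K) (Proj K) where
  smul g x := Projectivization.map ((g : Matrix (Fin 2) (Fin 2) K).mulVecLin)
    (GLmulVecLin_injective g) x
  one_smul x := by
    induction x using Projectivization.ind with
    | h v hv =>
      show Projectivization.map _ _ _ = _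
      simp [Projectivization.map_mk]
  mul_smul g h x := by
    induction x using Projectivization.ind with
    | h v hv =>
      show Projectivization.map _ _ _ =
        Projectivization.map _ _ (Projectivization.map _ _ _)
      simp [Projectivization.map_mk, Matrix.mulVecLin_apply, Matrix.mulVec_mulVec,
        Units.val_mul]

lemma GL_smul_mk (g : GL (Fin 2) K) (v : Fin 2 → K) (hv : v ≠ 0) :
    g • Projectivization.mk K v hv =
      Projectivization.mk K ((g : Matrix (Fin 2) (Fin 2) K).mulVec v)
        (GLmulVec_ne_zero g hv) := by
  show Projectivization.map _ _ _ = _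
  simp [Projectivization.map_mk, Matrix.mulVecLin_apply]

/-- The action of `SL(2,K)` on the projective line. -/
instance SLProjAction : MulAction (Matrix.SpecialLinearGroup (Fin 2) K) (Proj K) :=
  MulAction.compHom _ (Matrix.SpecialLinearGroup.toGL)

end

noncomputable section
variable {K : Type*} [Field K]

lemma center_smul_eq (c : GL (Fin 2) K) (hc : c ∈ Subgroup.center (GL (Fin 2) K))
    (x : Proj K) : c • x = x := by
  have hcomm : ∀ t : Matrix.TransvectionStruct (Fin 2) K,
      Commute t.toMatrix (c : Matrix (Fin 2) (Fin 2) K) := by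
    intro t
    let u : GL (Fin 2) K := ⟨t.toMatrix, t.inv.toMatrix, t.mul_inv, t.inv_mul⟩
    have h := Subgroup.mem_center_iff.mp hc u
    have := congrArg Units.val h
    simpa [u, Commute, SemiconjBy] using this
  obtain ⟨r, hr⟩ := Matrix.mem_range_scalar_of_commute_transvectionStruct hcomm
  have hr0 : r ≠ 0 := by
    intro h0
    have hne : (![1, 0] : Fin 2 → K) ≠ 0 := by
      intro h
      have := congrFun h 0
      simp at this
    have := GLmulVec_ne_zero c hne
    rw [← hr, h0] at this
    rw [show (0 : K) = (0 : K) from rfl] at this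
    apply this
    funext i
    simp [Matrix.mulVec_diagonal]
  induction x using Projectivization.ind with
  | h v hv =>
    rw [GL_smul_mk]
    rw [Projectivization.mk_eq_mk_iff]
    refine ⟨Units.mk0 r hr0, ?_⟩
    rw [← hr]
    funext i
    simp [Matrix.mulVec_diagonal]

end

noncomputable section

/-- The projective general linear group `PGL(2,K) = GL(2,K)/Z(GL(2,K))`. -/
abbrev PGL2 (K : Type*) [Field K] : Type _ :=
  GL (Fin 2) K ⧸ Subgroup.center (GL (Fin 2) K)

variable {K : Type*} [Field K]

/-- The action of `GL(2,K)` on the projective line descends to `PGL(2,K)`. -/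
instance PGLProjSMul : SMul (PGL2 K) (Proj K) :=
  ⟨fun g x => Quotient.liftOn' g (fun a => a • x) (by
    intro a b hab
    rw [QuotientGroup.leftRel_apply] at hab
    show a • x = b • x
    have hb : b = a * (a⁻¹ * b) := by group
    rw [hb, mul_smul, center_smul_eq _ hab])⟩

instance PGLProjAction : MulAction (PGL2 K) (Proj K) where
  one_smul x := center_smul_eq 1 (Subgroup.one_mem _) x
  mul_smul g h x := by
    induction g using Quotient.inductionOn' with
    | h a =>
      induction h using Quotient.inductionOn' with
      | h b => exact mul_smul a b x

lemma PGL2_smul_mk' (a : GL (Fin 2) K) (x : Proj K) :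
    (QuotientGroup.mk a : PGL2 K) • x = a • x := rfl

/-- The natural homomorphism `SL(2,K) → PGL(2,K)`. -/
def SLtoPGL2 (K : Type*) [Field K] : Matrix.SpecialLinearGroup (Fin 2) K →* PGL2 K :=
  (QuotientGroup.mk' (Subgroup.center (GL (Fin 2) K))).comp Matrix.SpecialLinearGroup.toGL

/-- `PSL(2,K)`, realized as the image of `SL(2,K)` in `PGL(2,K)`. -/
def PSL2 (K : Type*) [Field K] : Subgroup (PGL2 K) := (SLtoPGL2 K).range

/-- A subset `F` of a group `G` acting on the projective line over `K` is *intersecting for the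
action on `k`-element subsets* if any two of its elements agree on some `k`-element subset of
the projective line. -/
def IntersectingOnSubsets (G : Type*) [Group G] (K : Type*) [Field K]
    [MulAction G (Proj K)] (k : ℕ) (F : Set G) : Prop :=
  ∀ g ∈ F, ∀ h ∈ F, ∃ S : Set (Proj K), S.ncard = k ∧ g • S = h • S

end

noncomputable section A4Sec
namespace A4PGL

open Matrix

variable {K : Type*} [Field K]

lemma mem_center_of_scalar (r : K) (g : GL (Fin 2) K)
    (hg : (g : Matrix (Fin 2) (Fin 2) K) = r • (1 : Matrix (Fin 2) (Fin 2) K)) :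
    g ∈ Subgroup.center (GL (Fin 2) K) := by
  rw [Subgroup.mem_center_iff]
  intro h
  refine Units.ext ?_
  show (h : Matrix (Fin 2) (Fin 2) K) * g = (g : Matrix (Fin 2) (Fin 2) K) * h
  rw [hg, smul_mul_assoc, mul_smul_comm, one_mul, mul_one]

lemma mk_eq_mk_of_smul {g h : GL (Fin 2) K} (r : K)
    (hr : (g : Matrix (Fin 2) (Fin 2) K) = r • (h : Matrix (Fin 2) (Fin 2) K)) :
    (QuotientGroup.mk g : PGL2 K) = QuotientGroup.mk h := by
  have hc : g * h⁻¹ ∈ Subgroup.center (GL (Fin 2) K) := by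
    apply mem_center_of_scalar r
    have h1 : ((g * h⁻¹ : GL (Fin 2) K) : Matrix (Fin 2) (Fin 2) K)
        = (g : Matrix (Fin 2) (Fin 2) K) * ((h⁻¹ : GL (Fin 2) K) : Matrix (Fin 2) (Fin 2) K) :=
      rfl
    rw [h1, hr, smul_mul_assoc]
    congr 1
    exact h.mul_inv
  have h2 : g = (g * h⁻¹) * h := by group
  rw [h2, QuotientGroup.mk_mul, (QuotientGroup.eq_one_iff _).mpr hc, one_mul]

lemma exists_smul_of_mk_eq {g h : GL (Fin 2) K}
    (H : (QuotientGroup.mk g : PGL2 K) = QuotientGroup.mk h) :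
    ∃ r : K, (h : Matrix (Fin 2) (Fin 2) K) = r • (g : Matrix (Fin 2) (Fin 2) K) := by
  rw [QuotientGroup.eq] at H
  have hcomm : ∀ t : Matrix.TransvectionStruct (Fin 2) K,
      Commute t.toMatrix ((g⁻¹ * h : GL (Fin 2) K) : Matrix (Fin 2) (Fin 2) K) := by
    intro t
    let u : GL (Fin 2) K := ⟨t.toMatrix, t.inv.toMatrix, t.mul_inv, t.inv_mul⟩
    have h1 := Subgroup.mem_center_iff.mp H u
    have h2 := congrArg Units.val h1
    simpa [u, Commute, SemiconjBy] using h2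
  obtain ⟨r, hr⟩ := Matrix.mem_range_scalar_of_commute_transvectionStruct hcomm
  refine ⟨r, ?_⟩
  have h3 : h = g * (g⁻¹ * h) := by group
  have h4 : (h : Matrix (Fin 2) (Fin 2) K)
      = (g : Matrix (Fin 2) (Fin 2) K) * ((g⁻¹ * h : GL (Fin 2) K) : Matrix (Fin 2) (Fin 2) K) := by
    conv_lhs => rw [h3]
    rfl
  rw [h4, ← hr]
  rw [scalar_apply, ← Matrix.smul_one_eq_diagonal, mul_smul_comm, mul_one]

lemma mk_ne_mk {g h : GL (Fin 2) K}
    (H : ∀ r : K, (h : Matrix (Fin 2) (Fin 2) K) ≠ r • (g : Matrix (Fin 2) (Fin 2) K)) :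
    (QuotientGroup.mk g : PGL2 K) ≠ QuotientGroup.mk h := by
  intro hc
  obtain ⟨r, hr⟩ := exists_smul_of_mk_eq hc
  exact H r hr

/-- cross-multiplication criterion for equality in the projective line -/
lemma mk_eq_mk_iff_cross {v w : Fin 2 → K} (hv : v ≠ 0) (hw : w ≠ 0) :
    Projectivization.mk K v hv = Projectivization.mk K w hw ↔ v 0 * w 1 = v 1 * w 0 := by
  rw [Projectivization.mk_eq_mk_iff' K v w hv hw]
  constructor
  · rintro ⟨a, rfl⟩
    simp only [Pi.smul_apply, smul_eq_mul]
    ring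
  · intro hcr
    by_cases hw0 : w 0 = 0
    · have hw1 : w 1 ≠ 0 := by
        intro hw1
        apply hw
        funext j
        fin_cases j <;> simp [hw0, hw1]
      have hv0 : v 0 = 0 := by
        have := hcr
        rw [hw0, mul_zero] at this
        rcases mul_eq_zero.mp this with h | h
        · exact h
        · exact absurd h hw1
      refine ⟨v 1 / w 1, ?_⟩
      funext j
      fin_cases j <;> simp [hw0, hv0, div_mul_cancel₀, hw1]
    · refine ⟨v 0 / w 0, ?_⟩
      funext j
      fin_cases j
      · simp [div_mul_cancel₀, hw0]
      · show v 0 / w 0 * w 1 = v 1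
        field_simp
        linear_combination hcr

lemma vec_ne_zero_of_fst {a b : K} (ha : a ≠ 0) : ![a, b] ≠ 0 := by
  intro h
  exact ha (by simpa using congrFun h 0)

lemma vec_ne_zero_of_snd {a b : K} (hb : b ≠ 0) : ![a, b] ≠ 0 := by
  intro h
  exact hb (by simpa using congrFun h 1)

lemma mulVec_fin_two (a b c d x y : K) :
    (!![a, b; c, d] : Matrix (Fin 2) (Fin 2) K) *ᵥ ![x, y] = ![a * x + b * y, c * x + d * y] := by
  funext j
  fin_cases j <;> simp [Matrix.mulVec, dotProduct, Fin.sum_univ_two]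


/-- invariant 3-set for an element of order dividing 2 with a fixed point -/
lemma orb2 (g : PGL2 K) (x y : Proj K) (hg : g * g = 1) (hfix : g • x = x)
    (hmove : g • y ≠ y) (hxy : x ≠ y) :
    ∃ S : Set (Proj K), S.ncard = 3 ∧ g • S = S := by
  have hxgy : x ≠ g • y := by
    intro h
    apply hxy
    have h2 : g • x = g • (g • y) := by rw [← h]
    rw [hfix, smul_smul, hg, one_smul] at h2
    exact h2
  have hygy : y ≠ g • y := fun h => hmove h.symm
  refine ⟨{x, y, g • y}, ?_, ?_⟩
  · rw [Set.ncard_insert_of_notMem (by simp [hxgy, hxy]),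
      Set.ncard_insert_of_notMem (by simp [hygy]), Set.ncard_singleton]
  · rw [Set.smul_set_insert, Set.smul_set_insert, Set.smul_set_singleton, hfix, smul_smul, hg,
      one_smul]
    rw [Set.pair_comm (g • y) y]


/-- invariant 3-set (an orbit) for an element of order dividing 3 -/
lemma orb3 (g : PGL2 K) (x : Proj K) (hg : g * (g * g) = 1) (hmove : g • x ≠ x) :
    ∃ S : Set (Proj K), S.ncard = 3 ∧ g • S = S := by
  have hg3 : g • (g • (g • x)) = x := by
    have h1 : g • (g • (g • x)) = (g * (g * g)) • x := by rw [SemigroupAction.mul_smul, SemigroupAction.mul_smul]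
    rw [h1, hg, one_smul]
  have h01 : x ≠ g • x := Ne.symm hmove
  have h02 : x ≠ g • (g • x) := by
    intro h
    apply hmove
    have h2 : g • x = g • (g • (g • x)) := by rw [← h]
    rw [hg3] at h2
    exact h2
  have h12 : g • x ≠ g • (g • x) := by
    intro h
    exact hmove (MulAction.injective g h).symm
  refine ⟨{x, g • x, g • (g • x)}, ?_, ?_⟩
  · rw [Set.ncard_insert_of_notMem (by simp [h01, h02]),
      Set.ncard_insert_of_notMem (by simp [h12]), Set.ncard_singleton]
  · rw [Set.smul_set_insert, Set.smul_set_insert, Set.smul_set_singleton, hg3,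
      Set.pair_comm (g • (g • x)) x, Set.insert_comm (g • x) x]

section Concrete

set_option linter.unusedSectionVars false

lemma mat2_ext {a b c d e f g h : K} (h1 : a = e) (h2 : b = f) (h3 : c = g) (h4 : d = h) :
    !![a, b; c, d] = (!![e, f; g, h] : Matrix (Fin 2) (Fin 2) K) := by
  rw [h1, h2, h3, h4]

lemma smul_mat2 (r a b c d : K) :
    r • (!![a, b; c, d] : Matrix (Fin 2) (Fin 2) K) = !![r * a, r * b; r * c, r * d] := by
  ext i j
  fin_cases i <;> fin_cases j <;> simp

/-- the matrix `z ↦ -z` -/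
def aU : GL (Fin 2) K :=
  ⟨!![1, 0; 0, -1], !![1, 0; 0, -1],
    by rw [Matrix.mul_fin_two, Matrix.one_fin_two]
       exact mat2_ext (by ring) (by ring) (by ring) (by ring),
    by rw [Matrix.mul_fin_two, Matrix.one_fin_two]
       exact mat2_ext (by ring) (by ring) (by ring) (by ring)⟩

/-- the matrix `z ↦ 1/z` -/
def bU : GL (Fin 2) K :=
  ⟨!![0, 1; 1, 0], !![0, 1; 1, 0],
    by rw [Matrix.mul_fin_two, Matrix.one_fin_two]
       exact mat2_ext (by ring) (by ring) (by ring) (by ring),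
    by rw [Matrix.mul_fin_two, Matrix.one_fin_two]
       exact mat2_ext (by ring) (by ring) (by ring) (by ring)⟩

/-- the matrix `z ↦ -1/z` -/
def dU : GL (Fin 2) K :=
  ⟨!![0, 1; -1, 0], !![0, -1; 1, 0],
    by rw [Matrix.mul_fin_two, Matrix.one_fin_two]
       exact mat2_ext (by ring) (by ring) (by ring) (by ring),
    by rw [Matrix.mul_fin_two, Matrix.one_fin_two]
       exact mat2_ext (by ring) (by ring) (by ring) (by ring)⟩

variable (i j : K) (hi : i * i = -1) (hj : 2 * j = 1)

/-- an order-3 matrix -/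
def cU : GL (Fin 2) K :=
  ⟨!![1, 1; i, -i], !![j, -(j * i); j, j * i],
    by
      rw [Matrix.mul_fin_two, Matrix.one_fin_two]
      exact mat2_ext (by linear_combination hj) (by ring) (by ring)
        (by linear_combination (-2 * j) * hi + hj),
    by
      rw [Matrix.mul_fin_two, Matrix.one_fin_two]
      exact mat2_ext (by linear_combination (-j) * hi + hj) (by linear_combination j * hi)
        (by linear_combination j * hi) (by linear_combination (-j) * hi + hj)⟩

@[simp] lemma aU_val : ((aU : GL (Fin 2) K) : Matrix (Fin 2) (Fin 2) K) = !![1, 0; 0, -1] := rfl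
@[simp] lemma bU_val : ((bU : GL (Fin 2) K) : Matrix (Fin 2) (Fin 2) K) = !![0, 1; 1, 0] := rfl
@[simp] lemma dU_val : ((dU : GL (Fin 2) K) : Matrix (Fin 2) (Fin 2) K) = !![0, 1; -1, 0] := rfl
@[simp] lemma cU_val : ((cU i j hi hj : GL (Fin 2) K) : Matrix (Fin 2) (Fin 2) K)
    = !![1, 1; i, -i] := rfl

/-- The image of `aU` in `PGL₂`. -/
def Amk : PGL2 K := QuotientGroup.mk aU
/-- The image of `bU` in `PGL₂`. -/
def Bmk : PGL2 K := QuotientGroup.mk bU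
/-- The image of `dU` in `PGL₂`. -/
def Dmk : PGL2 K := QuotientGroup.mk dU
/-- The image of `cU` in `PGL₂`. -/
def Cmk : PGL2 K := QuotientGroup.mk (cU i j hi hj)

-- GL-level identities
lemma haa : (aU : GL (Fin 2) K) * aU = 1 := by
  apply Units.ext
  rw [Units.val_mul, Units.val_one, aU_val, Matrix.mul_fin_two, Matrix.one_fin_two]
  exact mat2_ext (by ring) (by ring) (by ring) (by ring)

lemma hbb : (bU : GL (Fin 2) K) * bU = 1 := by
  apply Units.ext
  rw [Units.val_mul, Units.val_one, bU_val, Matrix.mul_fin_two, Matrix.one_fin_two]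
  exact mat2_ext (by ring) (by ring) (by ring) (by ring)

lemma hab : (aU : GL (Fin 2) K) * bU = dU := by
  apply Units.ext
  rw [Units.val_mul, aU_val, bU_val, dU_val, Matrix.mul_fin_two]
  exact mat2_ext (by ring) (by ring) (by ring) (by ring)

lemma hdb : (dU : GL (Fin 2) K) * bU = aU := by
  apply Units.ext
  rw [Units.val_mul, dU_val, bU_val, aU_val, Matrix.mul_fin_two]
  exact mat2_ext (by ring) (by ring) (by ring) (by ring)

lemma had : (aU : GL (Fin 2) K) * dU = bU := by
  apply Units.ext
  rw [Units.val_mul, aU_val, dU_val, bU_val, Matrix.mul_fin_two]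
  exact mat2_ext (by ring) (by ring) (by ring) (by ring)

-- PGL-level identities
lemma hA2 : (Amk : PGL2 K) * Amk = 1 := by
  rw [Amk, ← QuotientGroup.mk_mul, haa, QuotientGroup.mk_one]

lemma hB2 : (Bmk : PGL2 K) * Bmk = 1 := by
  rw [Bmk, ← QuotientGroup.mk_mul, hbb, QuotientGroup.mk_one]

lemma hD2 : (Dmk : PGL2 K) * Dmk = 1 := by
  rw [Dmk, ← QuotientGroup.mk_mul]
  rw [show (QuotientGroup.mk (dU * dU) : PGL2 K) = QuotientGroup.mk 1 from
    mk_eq_mk_of_smul (-1) (by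
      rw [Units.val_mul, dU_val, Units.val_one, Matrix.mul_fin_two, Matrix.one_fin_two, smul_mat2]
      exact mat2_ext (by ring) (by ring) (by ring) (by ring))]
  rw [QuotientGroup.mk_one]

lemma hAB : (Amk : PGL2 K) * Bmk = Dmk := by
  rw [Amk, Bmk, Dmk, ← QuotientGroup.mk_mul, hab]

lemma hBA : (Bmk : PGL2 K) * Amk = Dmk := by
  rw [Amk, Bmk, Dmk, ← QuotientGroup.mk_mul]
  exact mk_eq_mk_of_smul (-1) (by
    rw [Units.val_mul, bU_val, aU_val, dU_val, Matrix.mul_fin_two, smul_mat2]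
    exact mat2_ext (by ring) (by ring) (by ring) (by ring))

lemma hAD : (Amk : PGL2 K) * Dmk = Bmk := by
  rw [Amk, Bmk, Dmk, ← QuotientGroup.mk_mul, had]

lemma hDA : (Dmk : PGL2 K) * Amk = Bmk := by
  rw [Amk, Bmk, Dmk, ← QuotientGroup.mk_mul]
  exact mk_eq_mk_of_smul (-1) (by
    rw [Units.val_mul, dU_val, aU_val, bU_val, Matrix.mul_fin_two, smul_mat2]
    exact mat2_ext (by ring) (by ring) (by ring) (by ring))

lemma hBD : (Bmk : PGL2 K) * Dmk = Amk := by
  rw [Amk, Bmk, Dmk, ← QuotientGroup.mk_mul]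
  exact mk_eq_mk_of_smul (-1) (by
    rw [Units.val_mul, bU_val, dU_val, aU_val, Matrix.mul_fin_two, smul_mat2]
    exact mat2_ext (by ring) (by ring) (by ring) (by ring))

lemma hDB : (Dmk : PGL2 K) * Bmk = Amk := by
  rw [Amk, Bmk, Dmk, ← QuotientGroup.mk_mul, hdb]

lemma hC3 : (Cmk i j hi hj : PGL2 K) * (Cmk i j hi hj * Cmk i j hi hj) = 1 := by
  rw [Cmk]
  simp only [← QuotientGroup.mk_mul]
  rw [show (QuotientGroup.mk (cU i j hi hj * (cU i j hi hj * cU i j hi hj)) : PGL2 K)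
      = QuotientGroup.mk 1 from
    mk_eq_mk_of_smul (2 + 2 * i) (by
      simp only [Units.val_mul, cU_val, Units.val_one]
      rw [Matrix.mul_fin_two, Matrix.mul_fin_two, Matrix.one_fin_two, smul_mat2]
      exact mat2_ext (by linear_combination (-1 : K) * hi) (by linear_combination hi)
        (by linear_combination i * hi) (by linear_combination (-i - 2) * hi))]
  rw [QuotientGroup.mk_one]

lemma hBC3 : ((Bmk : PGL2 K) * Cmk i j hi hj)
    * ((Bmk * Cmk i j hi hj) * (Bmk * Cmk i j hi hj)) = 1 := by
  rw [Bmk, Cmk]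
  simp only [← QuotientGroup.mk_mul]
  rw [show (QuotientGroup.mk (bU * cU i j hi hj * (bU * cU i j hi hj * (bU * cU i j hi hj)))
      : PGL2 K) = QuotientGroup.mk 1 from
    mk_eq_mk_of_smul (2 - 2 * i) (by
      simp only [Units.val_mul, cU_val, bU_val, Units.val_one]
      simp only [Matrix.mul_fin_two]
      rw [Matrix.one_fin_two, smul_mat2]
      exact mat2_ext (by linear_combination (i - 2 : K) * hi) (by linear_combination (-i) * hi)
        (by linear_combination hi) (by linear_combination (-1 : K) * hi))]
  rw [QuotientGroup.mk_one]

lemma hCBCC : (Cmk i j hi hj : PGL2 K) * (Bmk * (Cmk i j hi hj * Cmk i j hi hj)) = Amk := by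
  rw [Bmk, Cmk, Amk]
  simp only [← QuotientGroup.mk_mul]
  exact mk_eq_mk_of_smul (2 + 2 * i) (by
    simp only [Units.val_mul, cU_val, bU_val, aU_val]
    simp only [Matrix.mul_fin_two]
    rw [smul_mat2]
    exact mat2_ext (by linear_combination (-1 : K) * hi) (by linear_combination hi)
      (by linear_combination (-i) * hi) (by linear_combination (i + 2) * hi))

lemma hCCBC : (Cmk i j hi hj : PGL2 K) * (Cmk i j hi hj * (Bmk * Cmk i j hi hj)) = Dmk := by
  rw [Bmk, Cmk, Dmk]
  simp only [← QuotientGroup.mk_mul]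
  exact mk_eq_mk_of_smul (2 - 2 * i) (by
    simp only [Units.val_mul, cU_val, bU_val, dU_val]
    simp only [Matrix.mul_fin_two]
    rw [smul_mat2]
    exact mat2_ext (by linear_combination hi) (by linear_combination (-1 : K) * hi)
      (by linear_combination (-i + 2) * hi) (by linear_combination i * hi))

-- distinctness
lemma one_ne_A (h2 : (2 : K) ≠ 0) : (1 : PGL2 K) ≠ Amk := by
  intro h
  rw [Amk, ← QuotientGroup.mk_one] at h
  obtain ⟨r, hr⟩ := exists_smul_of_mk_eq h
  have h00 := congrFun (congrFun hr 0) 0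
  have h11 := congrFun (congrFun hr 1) 1
  simp [aU_val] at h00 h11
  exact h2 (by linear_combination h00 - h11)

lemma one_ne_B : (1 : PGL2 K) ≠ Bmk := by
  intro h
  rw [Bmk, ← QuotientGroup.mk_one] at h
  obtain ⟨r, hr⟩ := exists_smul_of_mk_eq h
  have h01 := congrFun (congrFun hr 0) 1
  simp [bU_val] at h01

lemma one_ne_D : (1 : PGL2 K) ≠ Dmk := by
  intro h
  rw [Dmk, ← QuotientGroup.mk_one] at h
  obtain ⟨r, hr⟩ := exists_smul_of_mk_eq h
  have h01 := congrFun (congrFun hr 0) 1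
  simp [dU_val] at h01

lemma A_ne_B : (Amk : PGL2 K) ≠ Bmk := by
  intro h
  rw [Amk, Bmk] at h
  obtain ⟨r, hr⟩ := exists_smul_of_mk_eq h
  have h01 := congrFun (congrFun hr 0) 1
  simp [aU_val, bU_val] at h01

lemma A_ne_D : (Amk : PGL2 K) ≠ Dmk := by
  intro h
  rw [Amk, Dmk] at h
  obtain ⟨r, hr⟩ := exists_smul_of_mk_eq h
  have h01 := congrFun (congrFun hr 0) 1
  simp [aU_val, dU_val] at h01

lemma B_ne_D (h2 : (2 : K) ≠ 0) : (Bmk : PGL2 K) ≠ Dmk := by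
  intro h
  rw [Bmk, Dmk] at h
  obtain ⟨r, hr⟩ := exists_smul_of_mk_eq h
  have h01 := congrFun (congrFun hr 0) 1
  have h10 := congrFun (congrFun hr 1) 0
  simp [bU_val, dU_val] at h01 h10
  exact h2 (by linear_combination h01 - h10)

lemma C_ne_one : (Cmk i j hi hj : PGL2 K) ≠ 1 := by
  intro h
  rw [Cmk, ← QuotientGroup.mk_one] at h
  obtain ⟨r, hr⟩ := exists_smul_of_mk_eq h
  have h00 := congrFun (congrFun hr 0) 0
  have h01 := congrFun (congrFun hr 0) 1
  simp [cU_val] at h00 h01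
  have h3 : (1 : K) = 0 := by linear_combination h00 - h01
  exact one_ne_zero h3

/-- The Klein four subgroup of `PGL₂`. -/
def VK : Subgroup (PGL2 K) where
  carrier := {1, Amk, Bmk, Dmk}
  one_mem' := Set.mem_insert _ _
  mul_mem' := by
    intro x y hx hy
    simp only [Set.mem_insert_iff, Set.mem_singleton_iff] at hx hy ⊢
    rcases hx with rfl | rfl | rfl | rfl <;> rcases hy with rfl | rfl | rfl | rfl
    · exact Or.inl (one_mul 1)
    · exact Or.inr (Or.inl (one_mul _))
    · exact Or.inr (Or.inr (Or.inl (one_mul _)))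
    · exact Or.inr (Or.inr (Or.inr (one_mul _)))
    · exact Or.inr (Or.inl (mul_one _))
    · exact Or.inl hA2
    · exact Or.inr (Or.inr (Or.inr hAB))
    · exact Or.inr (Or.inr (Or.inl hAD))
    · exact Or.inr (Or.inr (Or.inl (mul_one _)))
    · exact Or.inr (Or.inr (Or.inr hBA))
    · exact Or.inl hB2
    · exact Or.inr (Or.inl hBD)
    · exact Or.inr (Or.inr (Or.inr (mul_one _)))
    · exact Or.inr (Or.inr (Or.inl hDA))
    · exact Or.inr (Or.inl hDB)
    · exact Or.inl hD2
  inv_mem' := by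
    intro x hx
    simp only [Set.mem_insert_iff, Set.mem_singleton_iff] at hx ⊢
    rcases hx with rfl | rfl | rfl | rfl
    · exact Or.inl inv_one
    · exact Or.inr (Or.inl (inv_eq_of_mul_eq_one_right hA2))
    · exact Or.inr (Or.inr (Or.inl (inv_eq_of_mul_eq_one_right hB2)))
    · exact Or.inr (Or.inr (Or.inr (inv_eq_of_mul_eq_one_right hD2)))

lemma card_VK (h2 : (2 : K) ≠ 0) : Nat.card (VK (K := K)) = 4 := by
  have hc : Nat.card (VK (K := K)) = ({1, Amk, Bmk, Dmk} : Set (PGL2 K)).ncard := by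
    rw [← Nat.card_coe_set_eq]
    rfl
  rw [hc, Set.ncard_insert_of_notMem (by simp [one_ne_A h2, one_ne_B, one_ne_D]),
    Set.ncard_insert_of_notMem (by simp [A_ne_B, A_ne_D]),
    Set.ncard_insert_of_notMem (by simp [B_ne_D h2]), Set.ncard_singleton]

-- points on the projective line
/-- the point `∞`. -/
def Pinf : Proj K := Projectivization.mk K ![1, 0] (vec_ne_zero_of_fst one_ne_zero)
/-- the point `0`. -/
def P0 : Proj K := Projectivization.mk K ![0, 1] (vec_ne_zero_of_snd one_ne_zero)
/-- the point `1`. -/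
def P1 : Proj K := Projectivization.mk K ![1, 1] (vec_ne_zero_of_fst one_ne_zero)
/-- the point `i`. -/
def Pi' : Proj K := Projectivization.mk K ![i, 1] (vec_ne_zero_of_snd one_ne_zero)

lemma pgl_smul_mk (g : GL (Fin 2) K) (v : Fin 2 → K) (hv : v ≠ 0) :
    (QuotientGroup.mk g : PGL2 K) • Projectivization.mk K v hv
      = Projectivization.mk K ((g : Matrix (Fin 2) (Fin 2) K).mulVec v)
        (GLmulVec_ne_zero g hv) := by
  rw [PGL2_smul_mk', GL_smul_mk]

end Concrete

section P4sec

/-- relator `x²` -/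
def r1 : FreeGroup Bool := .of false * .of false
/-- relator `y³` -/
def r2 : FreeGroup Bool := .of true * (.of true * .of true)
/-- relator `(xy)³` -/
def r3 : FreeGroup Bool :=
  (.of false * .of true) * ((.of false * .of true) * (.of false * .of true))

/-- the relations of a presentation of `Alt(4)` -/
def rels : Set (FreeGroup Bool) := {r1, r2, r3}

/-- the group `⟨x, y ∣ x², y³, (xy)³⟩` -/
abbrev P4 := PresentedGroup rels

/-- first generator -/
def X : P4 := PresentedGroup.of false
/-- second generator -/
def Y : P4 := PresentedGroup.of true

lemma rel_one {r : FreeGroup Bool} (hr : r ∈ rels) : PresentedGroup.mk rels r = 1 :=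
  (QuotientGroup.eq_one_iff r).mpr (Subgroup.subset_normalClosure hr)

lemma hXX : (X : P4) * X = 1 := by
  have h := rel_one (show r1 ∈ rels from Set.mem_insert _ _)
  rw [r1, _root_.map_mul] at h
  exact h

lemma hYYY : (Y : P4) * (Y * Y) = 1 := by
  have h := rel_one (show r2 ∈ rels from Set.mem_insert_of_mem _ (Set.mem_insert _ _))
  rw [r2, _root_.map_mul, _root_.map_mul] at h
  exact h

lemma hR3 : ((X : P4) * Y) * ((X * Y) * (X * Y)) = 1 := by
  have h := rel_one (show r3 ∈ rels from
    Set.mem_insert_of_mem _ (Set.mem_insert_of_mem _ rfl))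
  rw [r3, _root_.map_mul, _root_.map_mul, _root_.map_mul, _root_.map_mul] at h
  exact h

lemma hXc : ∀ t : P4, X * (X * t) = t := by
  intro t
  rw [← mul_assoc, hXX, one_mul]

lemma hYc : ∀ t : P4, Y * (Y * (Y * t)) = t := by
  intro t
  rw [← mul_assoc, ← mul_assoc, show (Y : P4) * Y * Y = 1 from by
    rw [mul_assoc]; exact hYYY, one_mul]

lemma e2 : (X : P4) * (Y * (X * Y)) = Y * (Y * X) := by
  have h1 : ((X : P4) * (Y * (X * Y))) * (X * Y) = 1 := by
    rw [← hR3]; group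
  have h2 : ((Y : P4) * (Y * X)) * (X * Y) = 1 := by
    calc ((Y : P4) * (Y * X)) * (X * Y) = Y * (Y * (X * (X * Y))) := by group
    _ = Y * (Y * Y) := by rw [hXc]
    _ = 1 := hYYY
  exact mul_right_cancel (h1.trans h2.symm)

lemma e3 : (X : P4) * (Y * (X * (Y * Y))) = Y * (Y * (X * Y)) := by
  have h := congrArg (· * Y) e2
  simpa only [mul_assoc] using h

lemma e1 : (X : P4) * (Y * X) = Y * (Y * (X * (Y * Y))) := by
  have h := congrArg (· * Y) e3
  simp only [mul_assoc] at h
  rw [hYYY, mul_one] at h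
  exact h

lemma e4 : (X : P4) * (Y * (Y * X)) = Y * (X * Y) := by
  have h := congrArg (X * ·) e2
  rw [hXc] at h
  exact h.symm

lemma e5 : (X : P4) * (Y * (Y * (X * Y))) = Y * (X * (Y * Y)) := by
  have h := congrArg (· * Y) e4
  simpa only [mul_assoc] using h

lemma e6 : (X : P4) * (Y * (Y * (X * (Y * Y)))) = Y * X := by
  have h := congrArg (· * Y) e5
  simp only [mul_assoc] at h
  rw [hYYY, mul_one] at h
  exact h

/-- the twelve elements of `P4` -/
def T : Set P4 :=
  {1, Y, Y * Y, X, X * Y, X * (Y * Y), Y * X, Y * (X * Y), Y * (X * (Y * Y)),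
    Y * (Y * X), Y * (Y * (X * Y)), Y * (Y * (X * (Y * Y)))}

lemma L_X : ∀ t ∈ T, X * t ∈ T := by
  intro t ht
  simp only [T, Set.mem_insert_iff, Set.mem_singleton_iff] at ht ⊢
  rcases ht with rfl | rfl | rfl | rfl | rfl | rfl | rfl | rfl | rfl | rfl | rfl | rfl
  · exact Or.inr (Or.inr (Or.inr (Or.inl (mul_one X))))
  · exact Or.inr (Or.inr (Or.inr (Or.inr (Or.inl rfl))))
  · exact Or.inr (Or.inr (Or.inr (Or.inr (Or.inr (Or.inl rfl)))))
  · exact Or.inl hXX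
  · exact Or.inr (Or.inl (hXc Y))
  · exact Or.inr (Or.inr (Or.inl (hXc (Y * Y))))
  · exact Or.inr (Or.inr (Or.inr (Or.inr (Or.inr (Or.inr (Or.inr (Or.inr (Or.inr (Or.inr
      (Or.inr e1))))))))))
  · exact Or.inr (Or.inr (Or.inr (Or.inr (Or.inr (Or.inr (Or.inr (Or.inr (Or.inr
      (Or.inl e2)))))))))
  · exact Or.inr (Or.inr (Or.inr (Or.inr (Or.inr (Or.inr (Or.inr (Or.inr (Or.inr (Or.inr
      (Or.inl e3))))))))))
  · exact Or.inr (Or.inr (Or.inr (Or.inr (Or.inr (Or.inr (Or.inr (Or.inl e4)))))))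
  · exact Or.inr (Or.inr (Or.inr (Or.inr (Or.inr (Or.inr (Or.inr (Or.inr (Or.inl e5))))))))
  · exact Or.inr (Or.inr (Or.inr (Or.inr (Or.inr (Or.inr (Or.inl e6))))))

lemma L_Y : ∀ t ∈ T, Y * t ∈ T := by
  intro t ht
  simp only [T, Set.mem_insert_iff, Set.mem_singleton_iff] at ht ⊢
  rcases ht with rfl | rfl | rfl | rfl | rfl | rfl | rfl | rfl | rfl | rfl | rfl | rfl
  · exact Or.inr (Or.inl (mul_one Y))
  · exact Or.inr (Or.inr (Or.inl rfl))
  · exact Or.inl hYYY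
  · exact Or.inr (Or.inr (Or.inr (Or.inr (Or.inr (Or.inr (Or.inl rfl))))))
  · exact Or.inr (Or.inr (Or.inr (Or.inr (Or.inr (Or.inr (Or.inr (Or.inl rfl)))))))
  · exact Or.inr (Or.inr (Or.inr (Or.inr (Or.inr (Or.inr (Or.inr (Or.inr (Or.inl rfl))))))))
  · exact Or.inr (Or.inr (Or.inr (Or.inr (Or.inr (Or.inr (Or.inr (Or.inr (Or.inr
      (Or.inl rfl)))))))))
  · exact Or.inr (Or.inr (Or.inr (Or.inr (Or.inr (Or.inr (Or.inr (Or.inr (Or.inr (Or.inr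
      (Or.inl rfl))))))))))
  · exact Or.inr (Or.inr (Or.inr (Or.inr (Or.inr (Or.inr (Or.inr (Or.inr (Or.inr (Or.inr
      (Or.inr rfl))))))))))
  · exact Or.inr (Or.inr (Or.inr (Or.inl (hYc X))))
  · exact Or.inr (Or.inr (Or.inr (Or.inr (Or.inl (hYc (X * Y))))))
  · exact Or.inr (Or.inr (Or.inr (Or.inr (Or.inr (Or.inl (hYc (X * (Y * Y))))))))

lemma hXinv : (X : P4)⁻¹ = X := inv_eq_of_mul_eq_one_right hXX
lemma hYinv : (Y : P4)⁻¹ = Y * Y := inv_eq_of_mul_eq_one_right hYYY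

lemma mem_T : ∀ g : P4, g ∈ T := by
  intro g
  refine PresentedGroup.induction_on g ?_
  intro z
  rw [← FreeGroup.mk_toWord (x := z)]
  generalize z.toWord = L
  induction L with
  | nil =>
    rw [← FreeGroup.one_eq_mk, _root_.map_one]
    exact Set.mem_insert _ _
  | cons p L ih =>
    have hsplit : FreeGroup.mk (p :: L) = FreeGroup.mk [p] * FreeGroup.mk L := by
      rw [FreeGroup.mul_mk]
      rfl
    rw [hsplit, _root_.map_mul]
    rcases p with ⟨b, s⟩
    have hof : ∀ b' : Bool, FreeGroup.mk [(b', true)] = FreeGroup.of b' := fun _ => rfl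
    have hofinv : ∀ b' : Bool, FreeGroup.mk [(b', false)] = (FreeGroup.of b')⁻¹ := by
      intro b'
      rw [← hof, FreeGroup.inv_mk]
      rfl
    cases b <;> cases s
    · -- X⁻¹
      rw [hofinv, _root_.map_inv]
      show (X : P4)⁻¹ * _ ∈ T
      rw [hXinv]
      exact L_X _ ih
    · rw [hof]
      exact L_X _ ih
    · rw [hofinv, _root_.map_inv]
      show (Y : P4)⁻¹ * _ ∈ T
      rw [hYinv, mul_assoc]
      exact L_Y _ (L_Y _ ih)
    · rw [hof]
      exact L_Y _ ih

/-- the image of the first generator in `Alt(4)` -/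
def x4 : alternatingGroup (Fin 4) := ⟨Equiv.swap 0 1 * Equiv.swap 2 3, by rw [Equiv.Perm.mem_alternatingGroup]; decide⟩
/-- the image of the second generator in `Alt(4)` -/
def y4 : alternatingGroup (Fin 4) := ⟨Equiv.swap 0 1 * Equiv.swap 1 2, by rw [Equiv.Perm.mem_alternatingGroup]; decide⟩
/-- the generator assignment -/
def f4 : Bool → alternatingGroup (Fin 4) := fun b => if b then y4 else x4

lemma hf4 : ∀ r ∈ rels, FreeGroup.lift f4 r = 1 := by
  intro r hr
  simp only [rels, Set.mem_insert_iff, Set.mem_singleton_iff] at hr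
  rcases hr with rfl | rfl | rfl
  · rw [r1, _root_.map_mul, FreeGroup.lift_apply_of]
    decide
  · rw [r2, _root_.map_mul, _root_.map_mul, FreeGroup.lift_apply_of]
    decide
  · rw [r3]
    simp only [_root_.map_mul, FreeGroup.lift_apply_of]
    decide

/-- the projection from `P4` to `Alt(4)` -/
def π4 : P4 →* alternatingGroup (Fin 4) := PresentedGroup.toGroup hf4

lemma π4X : π4 X = x4 := PresentedGroup.toGroup.of hf4
lemma π4Y : π4 Y = y4 := PresentedGroup.toGroup.of hf4

lemma π4_inj : Function.Injective π4 := by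
  rw [← MonoidHom.ker_eq_bot_iff, eq_bot_iff]
  intro g hg
  rw [MonoidHom.mem_ker] at hg
  have hgT := mem_T g
  simp only [T, Set.mem_insert_iff, Set.mem_singleton_iff] at hgT
  rcases hgT with rfl | rfl | rfl | rfl | rfl | rfl | rfl | rfl | rfl | rfl | rfl | rfl <;>
    simp only [_root_.map_one, _root_.map_mul, π4X, π4Y] at hg
  · exact Subgroup.one_mem ⊥
  all_goals exact absurd hg (by decide)

lemma finiteP4 : Finite P4 := Finite.of_injective π4 π4_inj

lemma cardA4 : Nat.card (alternatingGroup (Fin 4)) = 12 := by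
  have h := two_mul_card_alternatingGroup (α := Fin 4)
  rw [Fintype.card_perm] at h
  rw [Nat.card_eq_fintype_card]
  have h4 : (Fintype.card (Fin 4)).factorial = 24 := by decide
  omega

lemma cube_of_π4 (t : P4) (h : π4 t * (π4 t * π4 t) = 1) : t * (t * t) = 1 := by
  apply π4_inj
  rw [_root_.map_mul, _root_.map_mul, _root_.map_one]
  exact h

end P4sec

section Moves

set_option linter.unusedSectionVars false

lemma hi0 (i : K) (hi : i * i = -1) : i ≠ 0 := by
  intro h
  rw [h, mul_zero] at hi
  exact one_ne_zero (α := K) (by linear_combination hi)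

lemma h1pi (i : K) (hi : i * i = -1) (h2 : (2 : K) ≠ 0) : 1 + i ≠ 0 := fun h => h2 (by linear_combination hi + (1 - i) * h)

lemma him1 (i : K) (hi : i * i = -1) (h2 : (2 : K) ≠ 0) : i - 1 ≠ 0 := fun h => h2 (by linear_combination hi - (i + 1) * h)

-- distinctness of points
lemma pinf_ne_p0 : (Pinf : Proj K) ≠ P0 := by
  rw [Pinf, P0, Ne, mk_eq_mk_iff_cross]
  norm_num

lemma pinf_ne_p1 : (Pinf : Proj K) ≠ P1 := by
  rw [Pinf, P1, Ne, mk_eq_mk_iff_cross]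
  norm_num

lemma p0_ne_p1 : (P0 : Proj K) ≠ P1 := by
  rw [P0, P1, Ne, mk_eq_mk_iff_cross]
  norm_num

lemma p1_ne_pinf : (P1 : Proj K) ≠ Pinf := by
  rw [P1, Pinf, Ne, mk_eq_mk_iff_cross]
  norm_num

lemma pi_ne_pinf (i : K) : (Pi' i : Proj K) ≠ Pinf := by
  rw [Pi', Pinf, Ne, mk_eq_mk_iff_cross]
  norm_num

-- fixed points
lemma fixB : (Bmk : PGL2 K) • (P1 : Proj K) = P1 := by
  rw [Bmk, P1, pgl_smul_mk, mk_eq_mk_iff_cross]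
  simp [bU_val, mulVec_fin_two]

lemma fixA : (Amk : PGL2 K) • (Pinf : Proj K) = Pinf := by
  rw [Amk, Pinf, pgl_smul_mk, mk_eq_mk_iff_cross]
  simp [aU_val, mulVec_fin_two]

lemma fixD (i : K) (hi : i * i = -1) : (Dmk : PGL2 K) • (Pi' i : Proj K) = Pi' i := by
  rw [Dmk, Pi', pgl_smul_mk, mk_eq_mk_iff_cross]
  simp only [dU_val, mulVec_fin_two, Matrix.cons_val_zero, Matrix.cons_val_one, Matrix.head_cons]
  linear_combination hi

-- moved points
lemma moveB : (Bmk : PGL2 K) • (Pinf : Proj K) ≠ Pinf := by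
  rw [Bmk, Pinf, Ne, pgl_smul_mk, mk_eq_mk_iff_cross]
  simp [bU_val, mulVec_fin_two]

lemma moveA (h2 : (2 : K) ≠ 0) : (Amk : PGL2 K) • (P1 : Proj K) ≠ P1 := by
  rw [Amk, P1, Ne, pgl_smul_mk, mk_eq_mk_iff_cross]
  simp only [aU_val, mulVec_fin_two, Matrix.cons_val_zero, Matrix.cons_val_one, Matrix.head_cons]
  intro h
  exact h2 (by linear_combination h)

lemma moveD : (Dmk : PGL2 K) • (Pinf : Proj K) ≠ Pinf := by
  rw [Dmk, Pinf, Ne, pgl_smul_mk, mk_eq_mk_iff_cross]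
  simp [dU_val, mulVec_fin_two]

lemma moveM1 (i j : K) (hi : i * i = -1) (hj : 2 * j = 1) : (Cmk i j hi hj : PGL2 K) • (Pinf : Proj K) ≠ Pinf := by
  rw [Cmk, Pinf, Ne, pgl_smul_mk, mk_eq_mk_iff_cross]
  simp only [cU_val, mulVec_fin_two, Matrix.cons_val_zero, Matrix.cons_val_one, Matrix.head_cons]
  intro h
  exact hi0 i hi (by linear_combination -h)

lemma moveM2 (i j : K) (hi : i * i = -1) (hj : 2 * j = 1) (h2 : (2 : K) ≠ 0) : ((Cmk i j hi hj : PGL2 K) * Cmk i j hi hj) • (Pinf : Proj K) ≠ Pinf := by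
  rw [SemigroupAction.mul_smul, Cmk, Pinf, Ne, pgl_smul_mk, pgl_smul_mk, mk_eq_mk_iff_cross]
  simp only [cU_val, mulVec_fin_two, Matrix.cons_val_zero, Matrix.cons_val_one, Matrix.head_cons]
  intro h
  exact h1pi i hi h2 (by linear_combination hi - h)

lemma moveM3 (i j : K) (hi : i * i = -1) (hj : 2 * j = 1) : ((Bmk : PGL2 K) * Cmk i j hi hj) • (Pinf : Proj K) ≠ Pinf := by
  rw [SemigroupAction.mul_smul, Cmk, Bmk, Pinf, Ne, pgl_smul_mk, pgl_smul_mk, mk_eq_mk_iff_cross]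
  simp only [cU_val, bU_val, mulVec_fin_two, Matrix.cons_val_zero, Matrix.cons_val_one,
    Matrix.head_cons]
  intro h
  exact one_ne_zero (α := K) (by linear_combination -h)

lemma moveM4 (i j : K) (hi : i * i = -1) (hj : 2 * j = 1) (h2 : (2 : K) ≠ 0) : ((Bmk : PGL2 K) * (Cmk i j hi hj * Cmk i j hi hj)) • (Pinf : Proj K) ≠ Pinf := by
  rw [SemigroupAction.mul_smul, SemigroupAction.mul_smul, Cmk, Bmk, Pinf, Ne, pgl_smul_mk, pgl_smul_mk,
    pgl_smul_mk, mk_eq_mk_iff_cross]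
  simp only [cU_val, bU_val, mulVec_fin_two, Matrix.cons_val_zero, Matrix.cons_val_one,
    Matrix.head_cons]
  intro h
  exact h1pi i hi h2 (by linear_combination -h)

lemma moveM5 (i j : K) (hi : i * i = -1) (hj : 2 * j = 1) : ((Cmk i j hi hj : PGL2 K) * Bmk) • (Pinf : Proj K) ≠ Pinf := by
  rw [SemigroupAction.mul_smul, Cmk, Bmk, Pinf, Ne, pgl_smul_mk, pgl_smul_mk, mk_eq_mk_iff_cross]
  simp only [cU_val, bU_val, mulVec_fin_two, Matrix.cons_val_zero, Matrix.cons_val_one,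
    Matrix.head_cons]
  intro h
  exact hi0 i hi (by linear_combination h)

lemma moveM6 (i j : K) (hi : i * i = -1) (hj : 2 * j = 1) (h2 : (2 : K) ≠ 0) : ((Cmk i j hi hj : PGL2 K) * (Bmk * Cmk i j hi hj)) • (Pinf : Proj K) ≠ Pinf := by
  rw [SemigroupAction.mul_smul, SemigroupAction.mul_smul, Cmk, Bmk, Pinf, Ne, pgl_smul_mk, pgl_smul_mk,
    pgl_smul_mk, mk_eq_mk_iff_cross]
  simp only [cU_val, bU_val, mulVec_fin_two, Matrix.cons_val_zero, Matrix.cons_val_one,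
    Matrix.head_cons]
  intro h
  exact h1pi i hi h2 (by linear_combination hi + h)

lemma moveM7 (i j : K) (hi : i * i = -1) (hj : 2 * j = 1) (h2 : (2 : K) ≠ 0) : ((Cmk i j hi hj : PGL2 K) * (Cmk i j hi hj * Bmk)) • (Pinf : Proj K) ≠ Pinf := by
  rw [SemigroupAction.mul_smul, SemigroupAction.mul_smul, Cmk, Bmk, Pinf, Ne, pgl_smul_mk, pgl_smul_mk,
    pgl_smul_mk, mk_eq_mk_iff_cross]
  simp only [cU_val, bU_val, mulVec_fin_two, Matrix.cons_val_zero, Matrix.cons_val_one,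
    Matrix.head_cons]
  intro h
  exact him1 i hi h2 (by linear_combination -hi - h)

lemma moveM8 (i j : K) (hi : i * i = -1) (hj : 2 * j = 1) (h2 : (2 : K) ≠ 0) : ((Cmk i j hi hj : PGL2 K)
    * (Cmk i j hi hj * (Bmk * (Cmk i j hi hj * Cmk i j hi hj)))) • (Pinf : Proj K) ≠ Pinf := by
  rw [SemigroupAction.mul_smul, SemigroupAction.mul_smul, SemigroupAction.mul_smul, SemigroupAction.mul_smul, Cmk, Bmk,
    Pinf, Ne, pgl_smul_mk, pgl_smul_mk, pgl_smul_mk, pgl_smul_mk, pgl_smul_mk,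
    mk_eq_mk_iff_cross]
  simp only [cU_val, bU_val, mulVec_fin_two, Matrix.cons_val_zero, Matrix.cons_val_one,
    Matrix.head_cons]
  intro h
  exact him1 i hi h2 (by
    have h' : (2 : K) * (i - 1) = 0 := by linear_combination (-(i * i) + i - 2) * hi - h
    rcases mul_eq_zero.mp h' with h'' | h''
    · exact absurd h'' h2
    · exact h'')

end Moves

section Main

set_option linter.unusedSectionVars false

set_option maxRecDepth 10000 in
lemma main (i j : K) (hi : i * i = -1) (hj : 2 * j = 1) (h2 : (2 : K) ≠ 0) :
    ∃ U : Subgroup (PGL2 K), Nat.card U = 12 ∧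
      Nonempty (U ≃* alternatingGroup (Fin 4)) ∧
      (∀ g ∈ U, ∃ S : Set (Proj K), S.ncard = 3 ∧ g • S = S) ∧
      IntersectingOnSubsets (PGL2 K) K 3 (U : Set (PGL2 K)) := by
  classical
  -- the homomorphism fromP4 to PGL2
  have hrels2 : ∀ r ∈ rels,
      FreeGroup.lift (fun b => if b then Cmk i j hi hj else Bmk) r = 1 := by
    intro r hr
    simp only [rels, Set.mem_insert_iff, Set.mem_singleton_iff] at hr
    rcases hr with rfl | rfl | rfl
    · rw [r1, _root_.map_mul, FreeGroup.lift_apply_of]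
      exact hB2
    · rw [r2, _root_.map_mul, _root_.map_mul, FreeGroup.lift_apply_of]
      exact hC3 i j hi hj
    · rw [r3]
      simp only [_root_.map_mul, FreeGroup.lift_apply_of]
      exact hBC3 i j hi hj
  set ρ : P4 →* PGL2 K := PresentedGroup.toGroup hrels2 with hρdef
  have ρX : ρ X = Bmk := PresentedGroup.toGroup.of hrels2
  have ρY : ρ Y = Cmk i j hi hj := PresentedGroup.toGroup.of hrels2
  have hZ : ρ (Y * (X * (Y * Y))) = Amk := by
    rw [_root_.map_mul, _root_.map_mul, _root_.map_mul, ρX, ρY]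
    exact hCBCC i j hi hj
  have hW : ρ (Y * (Y * (X * Y))) = Dmk := by
    rw [_root_.map_mul, _root_.map_mul, _root_.map_mul, ρX, ρY]
    exact hCCBC i j hi hj
  -- cardinality bookkeeping
  haveI : Finite P4 := finiteP4
  haveI hUfin : Finite ρ.range := by
    have hsurj : Function.Surjective (fun p : P4 => (⟨ρ p, ⟨p, rfl⟩⟩ : ρ.range)) := by
      rintro ⟨x, p, rfl⟩
      exact ⟨p, rfl⟩
    exact Finite.of_surjective _ hsurj
  have hVU : VK ≤ ρ.range := by
    intro g hg
    have hg' : g = 1 ∨ g = Amk ∨ g = Bmk ∨ g = Dmk := hg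
    rcases hg' with rfl | rfl | rfl | rfl
    · exact one_mem _
    · exact ⟨_, hZ⟩
    · exact ⟨X, ρX⟩
    · exact ⟨_, hW⟩
  have hCU : Cmk i j hi hj ∈ ρ.range := ⟨Y, ρY⟩
  have hC3' : (Cmk i j hi hj) ^ 3 = 1 := by
    have hh : (Cmk i j hi hj) ^ 3 = Cmk i j hi hj * (Cmk i j hi hj * Cmk i j hi hj) := by
      rw [pow_succ, pow_two, mul_assoc]
    rw [hh]
    exact hC3 i j hi hj
  haveI : Fact (Nat.Prime 3) := ⟨by norm_num⟩
  have hordC : orderOf (Cmk i j hi hj) = 3 := orderOf_eq_prime hC3' (C_ne_one i j hi hj)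
  have h3dvd : 3 ∣ Nat.card ρ.range := by
    have h := orderOf_injective ρ.range.subtype ρ.range.subtype_injective ⟨_, hCU⟩
    rw [show ρ.range.subtype ⟨_, hCU⟩ = Cmk i j hi hj from rfl, hordC] at h
    rw [h]
    exact orderOf_dvd_natCard _
  have h4dvd : 4 ∣ Nat.card ρ.range := by
    rw [← card_VK (K := K) h2]
    exact Subgroup.card_dvd_of_le hVU
  have h12dvd : 12 ∣ Nat.card ρ.range := by
    have h := Nat.Coprime.mul_dvd_of_dvd_of_dvd (by norm_num : Nat.Coprime 4 3) h4dvd h3dvd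
    exact (by norm_num : (12 : ℕ) = 4 * 3) ▸ h
  have hq : Nat.card (P4 ⧸ ρ.ker) = Nat.card ρ.range :=
    Nat.card_congr (QuotientGroup.quotientKerEquivRange ρ).toEquiv
  have hcardP : Nat.card P4 = Nat.card ρ.range * Nat.card ρ.ker := by
    rw [Subgroup.card_eq_card_quotient_mul_card_subgroup ρ.ker, hq]
  have hP4le : Nat.card P4 ≤ 12 := by
    rw [← cardA4]
    exact Nat.card_le_card_of_injective π4 π4_inj
  have hUpos : 0 < Nat.card ρ.range := Nat.card_pos
  have hkerpos : 0 < Nat.card ρ.ker := Nat.card_pos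
  have hU12 : Nat.card ρ.range = 12 := by
    have h1 : Nat.card ρ.range ≤ Nat.card P4 := by
      rw [hcardP]
      exact Nat.le_mul_of_pos_right _ hkerpos
    have h2' : 12 ≤ Nat.card ρ.range := Nat.le_of_dvd hUpos h12dvd
    omega
  have hker1 : Nat.card ρ.ker = 1 := by
    rw [hU12] at hcardP
    omega
  have hρinj : Function.Injective ρ := by
    rw [← MonoidHom.ker_eq_bot_iff]
    exact Subgroup.card_eq_one.mp hker1
  have hP12 : Nat.card P4 = 12 := by
    rw [hcardP, hU12, hker1]
  have hπbij : Function.Bijective π4 :=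
    (Nat.bijective_iff_injective_and_card π4).mpr ⟨π4_inj, by rw [hP12, cardA4]⟩
  have iso : Nonempty (ρ.range ≃* alternatingGroup (Fin 4)) :=
    ⟨(MonoidHom.ofInjective hρinj).symm.trans (MulEquiv.ofBijective π4 hπbij)⟩
  -- fixed 3-element subsets
  have hfix : ∀ g ∈ ρ.range, ∃ S : Set (Proj K), S.ncard = 3 ∧ g • S = S := by
    rintro g ⟨t, rfl⟩
    have htT := mem_T t
    simp only [T, Set.mem_insert_iff, Set.mem_singleton_iff] at htT
    have cube : ∀ t' : P4, π4 t' * (π4 t' * π4 t') = 1 → ρ t' * (ρ t' * ρ t') = 1 := by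
      intro t' h
      rw [← _root_.map_mul, ← _root_.map_mul, cube_of_π4 t' h, _root_.map_one]
    rcases htT with rfl | rfl | rfl | rfl | rfl | rfl | rfl | rfl | rfl | rfl | rfl | rfl
    · refine ⟨{Pinf, P0, P1}, ?_, ?_⟩
      · rw [Set.ncard_insert_of_notMem (by simp [pinf_ne_p0, pinf_ne_p1]),
          Set.ncard_insert_of_notMem (by simp [p0_ne_p1]), Set.ncard_singleton]
      · rw [_root_.map_one, one_smul]
    · refine orb3 _ Pinf (cube _ (by rw [π4Y]; decide)) ?_
      rw [ρY]
      exact moveM1 i j hi hj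
    · refine orb3 _ Pinf (cube _ (by simp only [_root_.map_mul, π4Y]; decide)) ?_
      simp only [_root_.map_mul, ρY]
      exact moveM2 i j hi hj h2
    · rw [ρX]
      exact orb2 _ P1 Pinf hB2 fixB moveB p1_ne_pinf
    · refine orb3 _ Pinf (cube _ (by simp only [_root_.map_mul, π4X, π4Y]; decide)) ?_
      simp only [_root_.map_mul, ρX, ρY]
      exact moveM3 i j hi hj
    · refine orb3 _ Pinf (cube _ (by simp only [_root_.map_mul, π4X, π4Y]; decide)) ?_
      simp only [_root_.map_mul, ρX, ρY]
      exact moveM4 i j hi hj h2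
    · refine orb3 _ Pinf (cube _ (by simp only [_root_.map_mul, π4X, π4Y]; decide)) ?_
      simp only [_root_.map_mul, ρX, ρY]
      exact moveM5 i j hi hj
    · refine orb3 _ Pinf (cube _ (by simp only [_root_.map_mul, π4X, π4Y]; decide)) ?_
      simp only [_root_.map_mul, ρX, ρY]
      exact moveM6 i j hi hj h2
    · rw [hZ]
      exact orb2 _ Pinf P1 hA2 fixA (moveA h2) pinf_ne_p1
    · refine orb3 _ Pinf (cube _ (by simp only [_root_.map_mul, π4X, π4Y]; decide)) ?_
      simp only [_root_.map_mul, ρX, ρY]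
      exact moveM7 i j hi hj h2
    · rw [hW]
      exact orb2 _ (Pi' i) Pinf hD2 (fixD i hi) moveD (pi_ne_pinf i)
    · refine orb3 _ Pinf (cube _ (by simp only [_root_.map_mul, π4X, π4Y]; decide)) ?_
      simp only [_root_.map_mul, ρX, ρY]
      exact moveM8 i j hi hj h2
  refine ⟨ρ.range, hU12, iso, hfix, ?_⟩
  intro g hg h hh
  obtain ⟨S, hS3, hSfix⟩ := hfix (h⁻¹ * g) (mul_mem (inv_mem hh) hg)
  refine ⟨S, hS3, ?_⟩
  have hh2 := congrArg (h • ·) hSfix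
  rw [smul_smul, mul_inv_cancel_left] at hh2
  exact hh2

end Main

end A4PGL
end A4Sec


open scoped Pointwise in
set_option synthInstance.maxHeartbeats 1000000 in
/-- For an odd prime power `q ≡ 1 (mod 4)`, the group `PGL(2, F_q)` contains a
subgroup of order 12 isomorphic to `Alt(4)` each of whose elements fixes a 3-element subset of
the projective line; in particular there is an intersecting subset of size 12 for the action on
3-element subsets. -/
theorem pgl2_alt4_intersecting_subgroup (p m : ℕ) [Fact p.Prime] (hp : Odd p) (hm : 1 ≤ m)
    (hq : p ^ m % 4 = 1) :
    ∃ U : Subgroup (PGL2 (GaloisField p m)),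
      Nat.card U = 12 ∧
      Nonempty (U ≃* alternatingGroup (Fin 4)) ∧
      (∀ g ∈ U, ∃ S : Set (Proj (GaloisField p m)), S.ncard = 3 ∧ g • S = S) ∧
      IntersectingOnSubsets _ (GaloisField p m) 3 (U : Set (PGL2 (GaloisField p m))) := by
  have hK2 : (2 : GaloisField p m) ≠ 0 := by
    intro h
    have hdvd : (p : ℕ) ∣ 2 := (CharP.cast_eq_zero_iff (GaloisField p m) p 2).mp h
    have hp2 : p = 2 := (Nat.prime_dvd_prime_iff_eq Fact.out Nat.prime_two).mp hdvd
    rw [hp2] at hp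
    exact (by decide : ¬ Odd 2) hp
  haveI : Fintype (GaloisField p m) := Fintype.ofFinite _
  have hsq : IsSquare (-1 : GaloisField p m) := by
    rw [FiniteField.isSquare_neg_one_iff]
    have hcard : Fintype.card (GaloisField p m) = p ^ m := by
      rw [← Nat.card_eq_fintype_card]
      exact GaloisField.card p m (by omega)
    rw [hcard, hq]
    norm_num
  obtain ⟨i, hi⟩ := hsq
  exact A4PGL.main i 2⁻¹ (by linear_combination -hi) (mul_inv_cancel₀ hK2) hK2
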